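/- If t_I, t_II > 0 with t_II < π√(L1C1), and ε > 0, then M_ε = e^{A_I ε} e^{A_II t_II} e^{A_I t_I} satisfies M_εᵀ P M_ε − P < 0 (strictly negative definite); moreover for ε = 0 the spectral radius of M_0 is strictly less than 1. -/

import Mathlib

open Matrix

section Helpers
open NormedSpace
attribute [local instance] Matrix.linftyOpNormedRing Matrix.linftyOpNormedAlgebra
  Matrix.linftyOpNormedSpace

noncomputable abbrev M4 := Matrix (Fin 4) (Fin 4) ℝ
noncomputable abbrev V4 := Fin 4 → ℝ



noncomputable def mulVecCLM (x : V4) : M4 →L[ℝ] V4 :=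
  LinearMap.toContinuousLinearMap
    { toFun := fun N => N.mulVec x,
      map_add' := fun N1 N2 => Matrix.add_mulVec N1 N2 x,
      map_smul' := fun c N => (Matrix.smul_mulVec c N x) }

lemma hasDerivAt_expv (A : M4) (x : V4) (t : ℝ) :
    HasDerivAt (fun s : ℝ => (exp (s • A)).mulVec x)
      (A.mulVec ((exp (t • A)).mulVec x)) t := by
  have h := (hasDerivAt_exp_smul_const' A t)
  have h2 := (mulVecCLM x).hasFDerivAt.comp_hasDerivAt t h
  exact h2.congr_deriv (Matrix.mulVec_mulVec (M := A) (N := exp (t • A)) x).symm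

lemma hasDerivAt_proj {u : ℝ → V4} {u' : V4} {t : ℝ} (hu : HasDerivAt u u' t) (i : Fin 4) :
    HasDerivAt (fun s => u s i) (u' i) t :=
  (ContinuousLinearMap.proj (R := ℝ) (φ := fun _ : Fin 4 => ℝ) i).hasFDerivAt.comp_hasDerivAt t hu

lemma hasDerivAt_dot {u w : ℝ → V4} {u' w' : V4} {t : ℝ}
    (hu : HasDerivAt u u' t) (hw : HasDerivAt w w' t) :
    HasDerivAt (fun s => u s ⬝ᵥ w s) (u' ⬝ᵥ w t + u t ⬝ᵥ w') t := by
  have : ∀ s, u s ⬝ᵥ w s = ∑ i, u s i * w s i := fun s => rfl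
  simp only [this]
  have : (u' ⬝ᵥ w t + u t ⬝ᵥ w') = ∑ i, (u' i * w t i + u t i * w' i) := by
    simp [dotProduct, Finset.sum_add_distrib]
  rw [this]
  exact HasDerivAt.fun_sum fun i _ => (hasDerivAt_proj hu i).mul (hasDerivAt_proj hw i)

lemma hasDerivAt_mulVecP (P : M4) {u : ℝ → V4} {u' : V4} {t : ℝ} (hu : HasDerivAt u u' t) :
    HasDerivAt (fun s => P.mulVec (u s)) (P.mulVec u') t :=
  (LinearMap.toContinuousLinearMap P.mulVecLin).hasFDerivAt.comp_hasDerivAt t hu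

/-- derivative of the quadratic form along the flow -/
lemma hasDerivAt_qf (A P : M4) (x : V4) (t : ℝ) :
    HasDerivAt (fun s : ℝ => ((exp (s • A)).mulVec x) ⬝ᵥ P.mulVec ((exp (s • A)).mulVec x))
      (((exp (t • A)).mulVec x) ⬝ᵥ ((Aᵀ * P + P * A).mulVec ((exp (t • A)).mulVec x))) t := by
  have hy := hasDerivAt_expv A x t
  have h := hasDerivAt_dot hy (hasDerivAt_mulVecP P hy)
  convert h using 1
  set y := (exp (t • A)).mulVec x
  rw [Matrix.add_mulVec, dotProduct_add, ← Matrix.mulVec_mulVec, ← Matrix.mulVec_mulVec,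
    Matrix.dotProduct_mulVec y Aᵀ, Matrix.vecMul_transpose]


noncomputable def entryCLM (i j : Fin 4) : M4 →L[ℝ] ℝ :=
  LinearMap.toContinuousLinearMap
    { toFun := fun N : M4 => N i j,
      map_add' := fun _ _ => rfl,
      map_smul' := fun _ _ => rfl }

lemma hasDerivAt_entry {E : ℝ → M4} {E' : M4} {s : ℝ} (h : HasDerivAt E E' s) (i j : Fin 4) :
    HasDerivAt (fun r => E r i j) (E' i j) s :=
  (entryCLM i j).hasFDerivAt.comp_hasDerivAt s h

lemma hasDerivAt_proj' {u : ℝ → V4} {u' : V4} {t : ℝ} (hu : HasDerivAt u u' t) (i : Fin 4) :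
    HasDerivAt (fun s => u s i) (u' i) t := hasDerivAt_proj hu i

lemma cont_y (A : M4) (x : V4) (c : V4) :
    Continuous fun s : ℝ => c ⬝ᵥ (exp (s • A)).mulVec x :=
  continuous_iff_continuousAt.2 fun t =>
    ((hasDerivAt_dot (hasDerivAt_const t c) (hasDerivAt_expv A x t)).continuousAt)

lemma closure_trick {g : ℝ → ℝ} (hg : Continuous g) {t : ℝ} (ht : 0 < t)
    (h : ∀ s ∈ Set.Ioo 0 t, g s = 0) : ∀ s ∈ Set.Icc 0 t, g s = 0 := by
  have hcl : IsClosed {s : ℝ | g s = 0} := isClosed_eq hg continuous_const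
  intro s hs
  have hsub : Set.Icc (0:ℝ) t ⊆ {s | g s = 0} := by
    rw [← closure_Ioo ht.ne]
    exact hcl.closure_subset_iff.mpr h
  exact hsub hs

lemma obs_step (A : M4) (x w : V4) {t : ℝ} (ht : 0 < t)
    (h : ∀ s ∈ Set.Icc 0 t, w ⬝ᵥ (exp (s • A)).mulVec x = 0) :
    ∀ s ∈ Set.Icc 0 t, (Aᵀ.mulVec w) ⬝ᵥ (exp (s • A)).mulVec x = 0 := by
  apply closure_trick (cont_y A x _) ht
  intro s hs
  have hg : HasDerivAt (fun s => w ⬝ᵥ (exp (s • A)).mulVec x)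
      ((Aᵀ.mulVec w) ⬝ᵥ (exp (s • A)).mulVec x) s := by
    have h1 := hasDerivAt_dot (hasDerivAt_const s w) (hasDerivAt_expv A x s)
    simpa [Matrix.dotProduct_mulVec, Matrix.mulVec_transpose] using h1
  have h0 : HasDerivAt (fun s => w ⬝ᵥ (exp (s • A)).mulVec x) 0 s := by
    apply HasDerivAt.congr_of_eventuallyEq (hasDerivAt_const s (0:ℝ))
    filter_upwards [Ioo_mem_nhds hs.1 hs.2] with r hr
    exact h r (Set.Ioo_subset_Icc_self hr)
  exact hg.unique h0

lemma exp_mul_exp_neg (A : M4) (t : ℝ) : exp (t • A) * exp (t • (-A)) = 1 := by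
  erw [← exp_add_of_commute (((Commute.refl A).neg_right).smul_left t |>.smul_right t)]
  rw [smul_neg, add_neg_cancel, exp_zero]

lemma exp_ode (A : M4) (u : ℝ → V4) (hu : ∀ s, HasDerivAt u (A.mulVec (u s)) s) (t : ℝ) :
    u t = (exp (t • A)).mulVec (u 0) := by
  set E := fun s : ℝ => exp (s • (-A)) with hE
  have hEcomm : ∀ s, E s * A = A * E s := by
    intro s
    exact ((((Commute.refl A).neg_right).smul_right s).exp_right).symm
  have hg : ∀ i s, HasDerivAt (fun r => (E r).mulVec (u r) i) 0 s := by
    intro i s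
    have hEd : HasDerivAt E ((-A) * E s) s := hasDerivAt_exp_smul_const' (-A) s
    have hsum : HasDerivAt (fun r => ∑ j, E r i j * u r j)
        (∑ j, (((-A) * E s) i j * u s j + E s i j * A.mulVec (u s) j)) s :=
      HasDerivAt.fun_sum fun j _ => ((hasDerivAt_entry hEd i j).mul (hasDerivAt_proj (hu s) j))
    have hval : (∑ j, (((-A) * E s) i j * u s j + E s i j * A.mulVec (u s) j)) = 0 := by
      rw [Finset.sum_add_distrib]
      have e1 : (∑ j, ((-A) * E s) i j * u s j) = ((-A) * E s).mulVec (u s) i := rfl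
      have e2 : (∑ j, E s i j * A.mulVec (u s) j) = ((E s) * A).mulVec (u s) i := by
        rw [← Matrix.mulVec_mulVec]; rfl
      rw [e1, e2, hEcomm]
      simp [Matrix.neg_mul, Matrix.neg_mulVec]
    rw [hval] at hsum
    exact hsum
  have hconst : ∀ i, (E t).mulVec (u t) i = (E 0).mulVec (u 0) i := by
    intro i
    exact is_const_of_deriv_eq_zero (fun r => (hg i r).differentiableAt)
      (fun r => (hg i r).deriv) t 0
  have hE0 : (E 0).mulVec (u 0) = u 0 := by
    simp [hE, Matrix.one_mulVec, exp_zero]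
  have hEt : (E t).mulVec (u t) = u 0 := by
    funext i; rw [hconst i, hE0]
  calc u t = Matrix.mulVec 1 (u t) := by rw [Matrix.one_mulVec]
    _ = ((exp (t • A)) * E t).mulVec (u t) := by rw [exp_mul_exp_neg]
    _ = (exp (t • A)).mulVec ((E t).mulVec (u t)) := by rw [← Matrix.mulVec_mulVec]
    _ = (exp (t • A)).mulVec (u 0) := by rw [hEt]

section Flow
variable (A P : M4) {Rr : ℝ}

lemma flow_antitone (hR : 0 < Rr)
    (hqf : ∀ v : V4, v ⬝ᵥ ((Aᵀ * P + P * A).mulVec v) = -(1/Rr) * (v 3)^2) (x : V4) :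
    Antitone (fun s : ℝ => ((exp (s • A)).mulVec x) ⬝ᵥ P.mulVec ((exp (s • A)).mulVec x)) := by
  apply antitone_of_deriv_nonpos
  · exact fun s => (hasDerivAt_qf A P x s).differentiableAt
  · intro s
    rw [(hasDerivAt_qf A P x s).deriv, hqf]
    have h2 : (0:ℝ) ≤ (1/Rr) * (((exp (s • A)).mulVec x) 3)^2 := by positivity
    linarith

lemma flow_eq_case (hR : 0 < Rr)
    (hqf : ∀ v : V4, v ⬝ᵥ ((Aᵀ * P + P * A).mulVec v) = -(1/Rr) * (v 3)^2) (x : V4)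
    {t : ℝ} (ht : 0 < t)
    (heq : ((exp (t • A)).mulVec x) ⬝ᵥ P.mulVec ((exp (t • A)).mulVec x)
          = x ⬝ᵥ P.mulVec x) :
    ∀ s ∈ Set.Icc 0 t, ((exp (s • A)).mulVec x) 3 = 0 := by
  set f := fun s : ℝ => ((exp (s • A)).mulVec x) ⬝ᵥ P.mulVec ((exp (s • A)).mulVec x) with hf
  have hanti := flow_antitone A P hR hqf x
  have hf0 : f 0 = x ⬝ᵥ P.mulVec x := by simp [hf, exp_zero, Matrix.one_mulVec]
  have hconst : ∀ s ∈ Set.Icc 0 t, f s = f 0 := by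
    intro s hs
    have h1 : f s ≤ f 0 := hanti hs.1
    have h2 : f t ≤ f s := hanti hs.2
    have h3 : f t = f 0 := by rw [hf0]; exact heq
    linarith
  have hcont : Continuous fun s : ℝ => ((exp (s • A)).mulVec x) 3 :=
    continuous_iff_continuousAt.2 fun r =>
      (hasDerivAt_proj (hasDerivAt_expv A x r) 3).continuousAt
  apply closure_trick hcont ht
  intro s hs
  have h0 : HasDerivAt f 0 s := by
    apply HasDerivAt.congr_of_eventuallyEq (hasDerivAt_const s (f 0))
    filter_upwards [Ioo_mem_nhds hs.1 hs.2] with r hr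
    exact hconst r (Set.Ioo_subset_Icc_self hr)
  have h1 : HasDerivAt f (-(1/Rr) * (((exp (s • A)).mulVec x) 3)^2) s := by
    have := hasDerivAt_qf A P x s
    rwa [hqf] at this
  have h2 := h1.unique h0
  field_simp at h2
  simpa using h2
end Flow


section Alg
variable {L1 L2 C1 C2 R : ℝ}

lemma Pinv_eq (hL1 : 0 < L1) (hL2 : 0 < L2) (hC1 : 0 < C1) (hC2 : 0 < C2) :
    ((1/2 : ℝ) • Matrix.diagonal ![L1, L2, C1, C2] : M4)⁻¹
      = Matrix.diagonal ![2/L1, 2/L2, 2/C1, 2/C2] := by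
  apply Matrix.inv_eq_right_inv
  rw [Matrix.smul_mul, Matrix.diagonal_mul_diagonal]
  ext i j
  fin_cases i <;> fin_cases j <;>
    simp [Matrix.diagonal, Matrix.one_apply, Matrix.vecHead, Matrix.vecTail] <;> field_simp

lemma AIe_eq (hL1 : 0 < L1) (hL2 : 0 < L2) (hC1 : 0 < C1) (hC2 : 0 < C2) :
    (1/2 : ℝ) • ((Matrix.diagonal ![2/L1, 2/L2, 2/C1, 2/C2] : M4) *
        !![0,0,0,0; 0,0,1,1; 0,-1,0,0; 0,-1,0,-1/R])
      = !![0,0,0,0; 0,0,1/L2,1/L2; 0,-(1/C1),0,0; 0,-(1/C2),0,-(1/(R*C2))] := by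
  ext i j
  fin_cases i <;> fin_cases j <;>
    simp [Matrix.diagonal_mul, Matrix.vecHead, Matrix.vecTail] <;> ring

lemma AIIe_eq (hL1 : 0 < L1) (hL2 : 0 < L2) (hC1 : 0 < C1) (hC2 : 0 < C2) :
    (1/2 : ℝ) • ((Matrix.diagonal ![2/L1, 2/L2, 2/C1, 2/C2] : M4) *
        !![0,0,-1,0; 0,0,0,1; 1,0,0,0; 0,-1,0,-1/R])
      = !![0,0,-(1/L1),0; 0,0,0,1/L2; 1/C1,0,0,0; 0,-(1/C2),0,-(1/(R*C2))] := by
  ext i j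
  fin_cases i <;> fin_cases j <;>
    simp [Matrix.diagonal_mul, Matrix.vecHead, Matrix.vecTail] <;> ring
end Alg

section Alg2
variable {L1 L2 C1 C2 R : ℝ}

-- abbreviations used below (explicit matrices)
local notation "Pe" => ((1/2 : ℝ) • Matrix.diagonal ![L1, L2, C1, C2] : M4)

lemma quad_AI (hL2 : L2 ≠ 0) (hC1 : C1 ≠ 0) (hC2 : C2 ≠ 0) (hR : R ≠ 0) (v : V4) :
    v ⬝ᵥ (((!![0,0,0,0; 0,0,1/L2,1/L2; 0,-(1/C1),0,0; 0,-(1/C2),0,-(1/(R*C2))] : M4)ᵀ * Pe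
      + Pe * !![0,0,0,0; 0,0,1/L2,1/L2; 0,-(1/C1),0,0; 0,-(1/C2),0,-(1/(R*C2))]).mulVec v)
      = -(1/R) * (v 3)^2 := by
  have hS : ((!![0,0,0,0; 0,0,1/L2,1/L2; 0,-(1/C1),0,0; 0,-(1/C2),0,-(1/(R*C2))] : M4)ᵀ * Pe
      + Pe * !![0,0,0,0; 0,0,1/L2,1/L2; 0,-(1/C1),0,0; 0,-(1/C2),0,-(1/(R*C2))])
      = !![0,0,0,0; 0,0,0,0; 0,0,0,0; 0,0,0,-(1/R)] := by
    ext i j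
    fin_cases i <;> fin_cases j <;>
      simp [Matrix.mul_apply, Fin.sum_univ_four, Matrix.diagonal, Matrix.vecHead,
        Matrix.vecTail] <;> field_simp <;> ring
  rw [hS]
  simp [Matrix.mulVec, dotProduct, Fin.sum_univ_four, Matrix.vecHead, Matrix.vecTail]
  ring

lemma quad_AII (hL1 : L1 ≠ 0) (hL2 : L2 ≠ 0) (hC1 : C1 ≠ 0) (hC2 : C2 ≠ 0) (hR : R ≠ 0) (v : V4) :
    v ⬝ᵥ (((!![0,0,-(1/L1),0; 0,0,0,1/L2; 1/C1,0,0,0; 0,-(1/C2),0,-(1/(R*C2))] : M4)ᵀ * Pe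
      + Pe * !![0,0,-(1/L1),0; 0,0,0,1/L2; 1/C1,0,0,0; 0,-(1/C2),0,-(1/(R*C2))]).mulVec v)
      = -(1/R) * (v 3)^2 := by
  have hS : ((!![0,0,-(1/L1),0; 0,0,0,1/L2; 1/C1,0,0,0; 0,-(1/C2),0,-(1/(R*C2))] : M4)ᵀ * Pe
      + Pe * !![0,0,-(1/L1),0; 0,0,0,1/L2; 1/C1,0,0,0; 0,-(1/C2),0,-(1/(R*C2))])
      = !![0,0,0,0; 0,0,0,0; 0,0,0,0; 0,0,0,-(1/R)] := by
    ext i j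
    fin_cases i <;> fin_cases j <;>
      simp [Matrix.mul_apply, Fin.sum_univ_four, Matrix.diagonal, Matrix.vecHead,
        Matrix.vecTail] <;> field_simp <;> ring
  rw [hS]
  simp [Matrix.mulVec, dotProduct, Fin.sum_univ_four, Matrix.vecHead, Matrix.vecTail]
  ring

lemma qf_pos (hL1 : 0 < L1) (hL2 : 0 < L2) (hC1 : 0 < C1) (hC2 : 0 < C2)
    {v : V4} (hv : v ≠ 0) : 0 < v ⬝ᵥ Matrix.mulVec Pe v := by
  have hform : v ⬝ᵥ Matrix.mulVec Pe v
      = (1/2) * (L1 * (v 0)^2 + L2 * (v 1)^2 + C1 * (v 2)^2 + C2 * (v 3)^2) := by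
    simp [Matrix.mulVec, dotProduct, Fin.sum_univ_four, Matrix.diagonal,
      Matrix.vecHead, Matrix.vecTail]
    ring
  rw [hform]
  have hex : ∃ i, v i ≠ 0 := by
    by_contra h
    push_neg at h
    exact hv (funext h)
  obtain ⟨i, hi⟩ := hex
  have h0 : (0:ℝ) ≤ L1 * (v 0)^2 := by positivity
  have h1 : (0:ℝ) ≤ L2 * (v 1)^2 := by positivity
  have h2 : (0:ℝ) ≤ C1 * (v 2)^2 := by positivity
  have h3 : (0:ℝ) ≤ C2 * (v 3)^2 := by positivity
  fin_cases i
  · have : 0 < L1 * (v 0)^2 := by positivity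
    linarith
  · have : 0 < L2 * (v 1)^2 := by positivity
    linarith
  · have : 0 < C1 * (v 2)^2 := by positivity
    linarith
  · have : 0 < C2 * (v 3)^2 := by positivity
    linarith

lemma qf_nonneg (hL1 : 0 < L1) (hL2 : 0 < L2) (hC1 : 0 < C1) (hC2 : 0 < C2)
    (v : V4) : 0 ≤ v ⬝ᵥ Matrix.mulVec Pe v := by
  rcases eq_or_ne v 0 with rfl | hv
  · simp
  · exact (qf_pos hL1 hL2 hC1 hC2 hv).le

lemma obs_rows_AI (hL2 : L2 ≠ 0) (hC1 : C1 ≠ 0) (hC2 : C2 ≠ 0) (hR : R ≠ 0) (x : V4)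
    (h0 : x 3 = 0)
    (h1 : ((!![0,0,0,0; 0,0,1/L2,1/L2; 0,-(1/C1),0,0; 0,-(1/C2),0,-(1/(R*C2))] : M4)ᵀ.mulVec
        ![0,0,0,1]) ⬝ᵥ x = 0)
    (h2 : ((!![0,0,0,0; 0,0,1/L2,1/L2; 0,-(1/C1),0,0; 0,-(1/C2),0,-(1/(R*C2))] : M4)ᵀ.mulVec
        ((!![0,0,0,0; 0,0,1/L2,1/L2; 0,-(1/C1),0,0; 0,-(1/C2),0,-(1/(R*C2))] : M4)ᵀ.mulVec
          ![0,0,0,1])) ⬝ᵥ x = 0) :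
    x 1 = 0 ∧ x 2 = 0 := by
  simp [Matrix.mulVec, dotProduct, Fin.sum_univ_four, Matrix.vecHead, Matrix.vecTail,
    h0] at h1 h2
  have hx1 : x 1 = 0 := h1.resolve_left hC2
  refine ⟨hx1, ?_⟩
  rw [hx1] at h2
  field_simp at h2
  simpa [hC2, hR] using h2
end Alg2

section Rot
variable {L1 L2 C1 C2 R : ℝ}

lemma rot_deriv (hL1 : L1 ≠ 0) (hC1 : C1 ≠ 0) {ω : ℝ} (hω : L1 * ω^2 = 1/C1) (α s : ℝ) :
    HasDerivAt (fun t : ℝ => (![α * Real.cos (ω*t), 0, α*(L1*ω) * Real.sin (ω*t), 0] : V4))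
      (Matrix.mulVec (!![0,0,-(1/L1),0; 0,0,0,1/L2; 1/C1,0,0,0; 0,-(1/C2),0,-(1/(R*C2))] : M4)
        (![α * Real.cos (ω*s), 0, α*(L1*ω) * Real.sin (ω*s), 0])) s := by
  have hmv : ∀ c d : ℝ,
      Matrix.mulVec (!![0,0,-(1/L1),0; 0,0,0,1/L2; 1/C1,0,0,0; 0,-(1/C2),0,-(1/(R*C2))] : M4)
        (![c, 0, d, 0]) = ![-(1/L1)*d, 0, (1/C1)*c, 0] := by
    intro c d
    funext i
    fin_cases i <;>
      simp [Matrix.mulVec, dotProduct, Fin.sum_univ_four, Matrix.vecHead, Matrix.vecTail]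
  rw [hmv]
  refine hasDerivAt_pi.mpr fun i => ?_
  have hlin : HasDerivAt (fun t : ℝ => ω * t) ω s := by
    simpa using (hasDerivAt_id s).const_mul ω
  have hcos : HasDerivAt (fun t : ℝ => Real.cos (ω*t)) (-Real.sin (ω*s) * ω) s :=
    (Real.hasDerivAt_cos (ω*s)).comp s hlin
  have hsin : HasDerivAt (fun t : ℝ => Real.sin (ω*t)) (Real.cos (ω*s) * ω) s :=
    (Real.hasDerivAt_sin (ω*s)).comp s hlin
  fin_cases i
  · show HasDerivAt (fun t : ℝ => α * Real.cos (ω*t))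
      (-(1/L1) * (α*(L1*ω) * Real.sin (ω*s))) s
    refine (hcos.const_mul α).congr_deriv ?_
    field_simp
  · show HasDerivAt (fun _ : ℝ => (0:ℝ)) 0 s
    exact hasDerivAt_const s 0
  · show HasDerivAt (fun t : ℝ => α*(L1*ω) * Real.sin (ω*t))
      ((1/C1) * (α * Real.cos (ω*s))) s
    refine (hsin.const_mul (α*(L1*ω))).congr_deriv ?_
    linear_combination (α * Real.cos (ω*s)) * hω
  · show HasDerivAt (fun _ : ℝ => (0:ℝ)) 0 s
    exact hasDerivAt_const s 0
end Rot

lemma spectrum_eigen (N : Matrix (Fin 4) (Fin 4) ℂ) {z : ℂ} (hz : z ∈ spectrum ℂ N) :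
    ∃ v : Fin 4 → ℂ, v ≠ 0 ∧ N.mulVec v = z • v := by
  rw [spectrum.mem_iff] at hz
  have hdet : (algebraMap ℂ (Matrix (Fin 4) (Fin 4) ℂ) z - N).det = 0 := by
    by_contra h
    exact hz ((Matrix.isUnit_iff_isUnit_det _).mpr (isUnit_iff_ne_zero.mpr h))
  obtain ⟨v, hv0, hv⟩ := (Matrix.exists_mulVec_eq_zero_iff).mpr hdet
  refine ⟨v, hv0, ?_⟩
  have halg : (algebraMap ℂ (Matrix (Fin 4) (Fin 4) ℂ) z).mulVec v = z • v := by
    rw [Matrix.algebraMap_eq_diagonal]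
    funext i
    simp [Matrix.mulVec_diagonal, Pi.algebraMap_apply, Algebra.algebraMap_self_apply]
  rw [Matrix.sub_mulVec, halg, sub_eq_zero] at hv
  exact hv.symm

lemma mulVec_re (N : M4) (v : Fin 4 → ℂ) (i : Fin 4) :
    (((N.map Complex.ofReal).mulVec v) i).re = (N.mulVec fun j => (v j).re) i := by
  simp [Matrix.mulVec, dotProduct, Complex.re_sum, Complex.mul_re]

lemma mulVec_im (N : M4) (v : Fin 4 → ℂ) (i : Fin 4) :
    (((N.map Complex.ofReal).mulVec v) i).im = (N.mulVec fun j => (v j).im) i := by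
  simp [Matrix.mulVec, dotProduct, Complex.im_sum, Complex.mul_im]

section QR
variable {L1 L2 C1 C2 : ℝ}
lemma quad_rot (a b : V4) (c d : ℝ) :
    (c • a - d • b) ⬝ᵥ Matrix.mulVec ((1/2 : ℝ) • Matrix.diagonal ![L1, L2, C1, C2] : M4) (c • a - d • b)
      + (d • a + c • b) ⬝ᵥ Matrix.mulVec ((1/2 : ℝ) • Matrix.diagonal ![L1, L2, C1, C2] : M4) (d • a + c • b)
    = (c^2 + d^2) * (a ⬝ᵥ Matrix.mulVec ((1/2 : ℝ) • Matrix.diagonal ![L1, L2, C1, C2] : M4) a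
        + b ⬝ᵥ Matrix.mulVec ((1/2 : ℝ) • Matrix.diagonal ![L1, L2, C1, C2] : M4) b) := by
  simp [Matrix.mulVec, dotProduct, Fin.sum_univ_four, Matrix.diagonal,
    Matrix.vecHead, Matrix.vecTail]
  ring
end QR

/-- if t_I, t_II > 0 with t_II < π√(L1C1), then for ε > 0 we have
M_εᵀPM_ε - P < 0, and for ε = 0 the spectral radius of M_0 is strictly less than 1. -/
theorem Meps_contraction
    (L1 L2 C1 C2 R : ℝ) (hL1 : 0 < L1) (hL2 : 0 < L2) (hC1 : 0 < C1)
    (hC2 : 0 < C2) (hR : 0 < R)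
    (P : Matrix (Fin 4) (Fin 4) ℝ) (hP : P = (1/2 : ℝ) • Matrix.diagonal ![L1, L2, C1, C2])
    (AIq AIIq : Matrix (Fin 4) (Fin 4) ℝ)
    (hAIq : AIq = !![0,0,0,0; 0,0,1,1; 0,-1,0,0; 0,-1,0,-1/R])
    (hAIIq : AIIq = !![0,0,-1,0; 0,0,0,1; 1,0,0,0; 0,-1,0,-1/R])
    (AI AII : Matrix (Fin 4) (Fin 4) ℝ)
    (hAI : AI = (1/2 : ℝ) • (P⁻¹ * AIq)) (hAII : AII = (1/2 : ℝ) • (P⁻¹ * AIIq))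
    (tI tII : ℝ) (htI : 0 < tI) (htII : 0 < tII)
    (htIIub : tII < Real.pi * Real.sqrt (L1 * C1))
    (M : ℝ → Matrix (Fin 4) (Fin 4) ℝ)
    (hM : ∀ ε, M ε = NormedSpace.exp (ε • AI) * NormedSpace.exp (tII • AII) *
                     NormedSpace.exp (tI • AI)) :
    (∀ ε > (0:ℝ), (P - (M ε)ᵀ * P * M ε).PosDef) ∧
    (∀ z ∈ spectrum ℂ ((M 0).map Complex.ofReal), ‖z‖ < 1) := by
  subst hP hAIq hAIIq hAI hAII
  set Pe : M4 := (1/2 : ℝ) • Matrix.diagonal ![L1, L2, C1, C2] with hPe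
  have hAIe : (1/2 : ℝ) • (Pe⁻¹ * !![0,0,0,0; 0,0,1,1; 0,-1,0,0; 0,-1,0,-1/R])
      = !![0,0,0,0; 0,0,1/L2,1/L2; 0,-(1/C1),0,0; 0,-(1/C2),0,-(1/(R*C2))] := by
    rw [hPe, Pinv_eq hL1 hL2 hC1 hC2]
    exact AIe_eq hL1 hL2 hC1 hC2
  have hAIIe : (1/2 : ℝ) • (Pe⁻¹ * !![0,0,-1,0; 0,0,0,1; 1,0,0,0; 0,-1,0,-1/R])
      = !![0,0,-(1/L1),0; 0,0,0,1/L2; 1/C1,0,0,0; 0,-(1/C2),0,-(1/(R*C2))] := by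
    rw [hPe, Pinv_eq hL1 hL2 hC1 hC2]
    exact AIIe_eq hL1 hL2 hC1 hC2
  set AIm : M4 := !![0,0,0,0; 0,0,1/L2,1/L2; 0,-(1/C1),0,0; 0,-(1/C2),0,-(1/(R*C2))] with hAImdef
  set AIIm : M4 := !![0,0,-(1/L1),0; 0,0,0,1/L2; 1/C1,0,0,0; 0,-(1/C2),0,-(1/(R*C2))] with hAIImdef
  rw [hAIe, hAIIe] at hM
  clear hAIe hAIIe
  -- quadratic-form dissipation identities
  have hqfI : ∀ v : V4, v ⬝ᵥ ((AImᵀ * Pe + Pe * AIm).mulVec v) = -(1/R) * (v 3)^2 := by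
    intro v
    rw [hAImdef, hPe]
    exact quad_AI hL2.ne' hC1.ne' hC2.ne' hR.ne' v
  have hqfII : ∀ v : V4, v ⬝ᵥ ((AIImᵀ * Pe + Pe * AIIm).mulVec v) = -(1/R) * (v 3)^2 := by
    intro v
    rw [hAIImdef, hPe]
    exact quad_AII hL1.ne' hL2.ne' hC1.ne' hC2.ne' hR.ne' v
  -- contraction along each flow
  have hcontr : ∀ (A : M4), (∀ v : V4, v ⬝ᵥ ((Aᵀ * Pe + Pe * A).mulVec v) = -(1/R) * (v 3)^2) →
      ∀ (x : V4) (t : ℝ), 0 ≤ t →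
      ((NormedSpace.exp (t • A)).mulVec x) ⬝ᵥ Pe.mulVec ((NormedSpace.exp (t • A)).mulVec x)
        ≤ x ⬝ᵥ Pe.mulVec x := by
    intro A hq x t ht
    have h := flow_antitone A Pe hR hq x ht
    simpa [NormedSpace.exp_zero, Matrix.one_mulVec] using h
  -- equality case : observability
  have hstage : ∀ (x : V4) (t : ℝ), 0 < t →
      ((NormedSpace.exp (t • AIm)).mulVec x) ⬝ᵥ Pe.mulVec ((NormedSpace.exp (t • AIm)).mulVec x)
        = x ⬝ᵥ Pe.mulVec x →
      x 1 = 0 ∧ x 2 = 0 ∧ x 3 = 0 := by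
    intro x t ht heq
    have h3 := flow_eq_case AIm Pe hR hqfI x ht heq
    have hmem0 : (0:ℝ) ∈ Set.Icc (0:ℝ) t := Set.left_mem_Icc.mpr ht.le
    have hw0 : ∀ s ∈ Set.Icc (0:ℝ) t,
        (![0,0,0,1] : V4) ⬝ᵥ (NormedSpace.exp (s • AIm)).mulVec x = 0 := by
      intro s hs
      have := h3 s hs
      simpa [dotProduct, Fin.sum_univ_four] using this
    have hw1 := obs_step AIm x ![0,0,0,1] ht hw0
    have hw2 := obs_step AIm x (AImᵀ.mulVec ![0,0,0,1]) ht hw1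
    have h00 : x 3 = 0 := by
      simpa [NormedSpace.exp_zero, Matrix.one_mulVec] using h3 0 hmem0
    have h10 : (AImᵀ.mulVec ![0,0,0,1]) ⬝ᵥ x = 0 := by
      simpa [NormedSpace.exp_zero, Matrix.one_mulVec] using hw1 0 hmem0
    have h20 : (AImᵀ.mulVec (AImᵀ.mulVec ![0,0,0,1])) ⬝ᵥ x = 0 := by
      simpa [NormedSpace.exp_zero, Matrix.one_mulVec] using hw2 0 hmem0
    rw [hAImdef] at h10 h20
    obtain ⟨h1, h2⟩ := obs_rows_AI hL2.ne' hC1.ne' hC2.ne' hR.ne' x h00 h10 h20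
    exact ⟨h1, h2, h00⟩
  -- vectors supported on the first coordinate are fixed by the AI flow
  have hfix : ∀ (t : ℝ) (v : V4), v 1 = 0 → v 2 = 0 → v 3 = 0 →
      (NormedSpace.exp (t • AIm)).mulVec v = v := by
    intro t v h1 h2 h3
    have hv0 : AIm.mulVec v = 0 := by
      rw [hAImdef]
      funext i
      fin_cases i <;>
        simp [Matrix.mulVec, dotProduct, Fin.sum_univ_four, h1, h2, h3,
          Matrix.vecHead, Matrix.vecTail]
    have hu : ∀ s : ℝ, HasDerivAt (fun _ : ℝ => v) (AIm.mulVec ((fun _ : ℝ => v) s)) s := by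
      intro s
      simpa [hv0] using hasDerivAt_const s v
    have h := exp_ode AIm (fun _ => v) hu t
    exact h.symm
  -- rotation formula for the AII flow on the first coordinate
  set ω : ℝ := (Real.sqrt (L1*C1))⁻¹ with hωdef
  have hsq : 0 < Real.sqrt (L1*C1) := Real.sqrt_pos.mpr (by positivity)
  have hωpos : 0 < ω := inv_pos.mpr hsq
  have hω : L1 * ω^2 = 1/C1 := by
    have h2 : Real.sqrt (L1*C1) ^ 2 = L1 * C1 := Real.sq_sqrt (by positivity)
    rw [hωdef, inv_pow, h2]
    field_simp
  have hrot : ∀ α : ℝ, (NormedSpace.exp (tII • AIIm)).mulVec ![α,0,0,0]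
      = ![α * Real.cos (ω*tII), 0, α*(L1*ω) * Real.sin (ω*tII), 0] := by
    intro α
    have hu : ∀ s : ℝ, HasDerivAt
        (fun t : ℝ => (![α * Real.cos (ω*t), 0, α*(L1*ω) * Real.sin (ω*t), 0] : V4))
        (AIIm.mulVec (![α * Real.cos (ω*s), 0, α*(L1*ω) * Real.sin (ω*s), 0])) s := by
      intro s
      rw [hAIImdef]
      exact rot_deriv hL1.ne' hC1.ne' hω α s
    have h := exp_ode AIIm _ hu tII
    have hu0 : (![α * Real.cos (ω*0), 0, α*(L1*ω) * Real.sin (ω*0), 0] : V4) = ![α,0,0,0] := by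
      norm_num
    rw [hu0] at h
    exact h.symm
  have hθπ : ω * tII < Real.pi := by
    have h1 : ω * tII < ω * (Real.pi * Real.sqrt (L1*C1)) := by
      exact (mul_lt_mul_iff_right₀ hωpos).mpr htIIub
    have h2 : ω * (Real.pi * Real.sqrt (L1*C1)) = Real.pi := by
      rw [hωdef]
      field_simp
    linarith
  have hsinθ : 0 < Real.sin (ω * tII) := Real.sin_pos_of_pos_of_lt_pi (by positivity) hθπ
  have hPt : Peᵀ = Pe := by
    rw [hPe]
    simp [Matrix.transpose_smul, Matrix.diagonal_transpose]
  -- unfolding the quadratic form of P - MᵀPM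
  have hquadM : ∀ (N : M4) (x : V4),
      x ⬝ᵥ ((Pe - Nᵀ * Pe * N).mulVec x)
        = x ⬝ᵥ Pe.mulVec x - (N.mulVec x) ⬝ᵥ Pe.mulVec (N.mulVec x) := by
    intro N x
    rw [Matrix.sub_mulVec, dotProduct_sub]
    congr 1
    rw [Matrix.mul_assoc, ← Matrix.mulVec_mulVec, Matrix.dotProduct_mulVec,
      Matrix.vecMul_transpose, ← Matrix.mulVec_mulVec]
  constructor
  · -- part 1 : strict contraction for ε > 0
    intro ε hε
    have hMe : ∀ x : V4, (M ε).mulVec x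
        = (NormedSpace.exp (ε • AIm)).mulVec ((NormedSpace.exp (tII • AIIm)).mulVec
            ((NormedSpace.exp (tI • AIm)).mulVec x)) := by
      intro x
      rw [hM ε, ← Matrix.mulVec_mulVec, ← Matrix.mulVec_mulVec]
    refine Matrix.PosDef.of_dotProduct_mulVec_pos ?_ ?_
    · -- hermitian
      show (Pe - (M ε)ᵀ * Pe * M ε)ᴴ = _
      rw [Matrix.conjTranspose_eq_transpose_of_trivial]
      rw [Matrix.transpose_sub, Matrix.transpose_mul, Matrix.transpose_mul,
        Matrix.transpose_transpose, hPt, Matrix.mul_assoc]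
    · intro x hx
      have hsx : star x = x := star_trivial x
      rw [hsx, hquadM (M ε) x]
      set y1 := (NormedSpace.exp (tI • AIm)).mulVec x with hy1
      set y2 := (NormedSpace.exp (tII • AIIm)).mulVec y1 with hy2
      set y3 := (NormedSpace.exp (ε • AIm)).mulVec y2 with hy3
      have hMx : (M ε).mulVec x = y3 := by rw [hMe x, ← hy1, ← hy2, ← hy3]
      rw [hMx]
      have hq1 : y1 ⬝ᵥ Pe.mulVec y1 ≤ x ⬝ᵥ Pe.mulVec x := hcontr AIm hqfI x tI htI.le
      have hq2 : y2 ⬝ᵥ Pe.mulVec y2 ≤ y1 ⬝ᵥ Pe.mulVec y1 := hcontr AIIm hqfII y1 tII htII.le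
      have hq3 : y3 ⬝ᵥ Pe.mulVec y3 ≤ y2 ⬝ᵥ Pe.mulVec y2 := hcontr AIm hqfI y2 ε hε.le
      rcases lt_or_eq_of_le (le_trans hq3 (le_trans hq2 hq1)) with hlt | heq
      · linarith
      · exfalso
        have he1 : y1 ⬝ᵥ Pe.mulVec y1 = x ⬝ᵥ Pe.mulVec x := by linarith
        obtain ⟨h1, h2, h3⟩ := hstage x tI htI he1
        have hxvec : x = ![x 0, 0, 0, 0] := by
          funext i
          fin_cases i <;> simp [h1, h2, h3]
        have hy1x : y1 = x := hfix tI x h1 h2 h3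
        have hy2rot : y2 = ![x 0 * Real.cos (ω*tII), 0, x 0*(L1*ω) * Real.sin (ω*tII), 0] := by
          rw [hy2, hy1x]
          rw [show x = ![x 0, 0, 0, 0] from hxvec]
          exact hrot (x 0)
        have he3 : y3 ⬝ᵥ Pe.mulVec y3 = y2 ⬝ᵥ Pe.mulVec y2 := by linarith
        obtain ⟨_, hz2, _⟩ := hstage y2 ε hε he3
        rw [hy2rot] at hz2
        have hz2' : x 0 * (L1*ω) * Real.sin (ω*tII) = 0 := hz2
        have hx0 : x 0 = 0 := by
          have hL1ω : 0 < L1 * ω := by positivity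
          rcases mul_eq_zero.mp hz2' with h | h
          · rcases mul_eq_zero.mp h with h' | h'
            · exact h'
            · exact absurd h' hL1ω.ne'
          · exact absurd h hsinθ.ne'
        apply hx
        rw [hxvec, hx0]
        funext i
        fin_cases i <;> simp
  · -- part 2 : spectral radius at ε = 0
    intro z hz
    have hM0 : ∀ x : V4, (M 0).mulVec x
        = (NormedSpace.exp (tII • AIIm)).mulVec ((NormedSpace.exp (tI • AIm)).mulVec x) := by
      intro x
      rw [hM 0]
      rw [zero_smul, NormedSpace.exp_zero, one_mul, ← Matrix.mulVec_mulVec]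
    obtain ⟨v, hv0, hv⟩ := spectrum_eigen _ hz
    set a : V4 := fun i => (v i).re with ha
    set b : V4 := fun i => (v i).im with hb
    have hMa : (M 0).mulVec a = z.re • a - z.im • b := by
      funext i
      have h1 := congrFun hv i
      have h2 := congrArg Complex.re h1
      rw [mulVec_re] at h2
      simpa [ha, hb, Complex.mul_re] using h2
    have hMb : (M 0).mulVec b = z.im • a + z.re • b := by
      funext i
      have h1 := congrFun hv i
      have h2 := congrArg Complex.im h1
      rw [mulVec_im] at h2
      simpa [ha, hb, Complex.mul_im, add_comm] using h2
    by_contra habs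
    push_neg at habs
    have h1z : 1 ≤ z.re^2 + z.im^2 := by
      have h := Complex.sq_norm z
      rw [Complex.normSq_apply] at h
      nlinarith [habs]
    set qa := a ⬝ᵥ Pe.mulVec a with hqa
    set qb := b ⬝ᵥ Pe.mulVec b with hqb
    have hqann : 0 ≤ qa := qf_nonneg hL1 hL2 hC1 hC2 a
    have hqbnn : 0 ≤ qb := qf_nonneg hL1 hL2 hC1 hC2 b
    have hQpos : 0 < qa + qb := by
      rcases eq_or_ne a 0 with hA | hA
      · rcases eq_or_ne b 0 with hB | hB
        · exfalso
          apply hv0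
          funext i
          have hre : (v i).re = 0 := by
            have := congrFun hA i
            simpa [ha] using this
          have him : (v i).im = 0 := by
            have := congrFun hB i
            simpa [hb] using this
          have : v i = 0 := by
            apply Complex.ext <;> simp [hre, him]
          simpa using this
        · have := qf_pos hL1 hL2 hC1 hC2 hB
          linarith
      · have := qf_pos hL1 hL2 hC1 hC2 hA
        linarith
    set w1a := (NormedSpace.exp (tI • AIm)).mulVec a with hw1a
    set w1b := (NormedSpace.exp (tI • AIm)).mulVec b with hw1b
    have hMa' : (M 0).mulVec a = (NormedSpace.exp (tII • AIIm)).mulVec w1a := hM0 a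
    have hMb' : (M 0).mulVec b = (NormedSpace.exp (tII • AIIm)).mulVec w1b := hM0 b
    set qMa := ((M 0).mulVec a) ⬝ᵥ Pe.mulVec ((M 0).mulVec a) with hqMadef
    set qMb := ((M 0).mulVec b) ⬝ᵥ Pe.mulVec ((M 0).mulVec b) with hqMbdef
    have hca1 : w1a ⬝ᵥ Pe.mulVec w1a ≤ qa := hcontr AIm hqfI a tI htI.le
    have hcb1 : w1b ⬝ᵥ Pe.mulVec w1b ≤ qb := hcontr AIm hqfI b tI htI.le
    have hca2 : qMa ≤ w1a ⬝ᵥ Pe.mulVec w1a := by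
      rw [hqMadef]
      rw [hMa']
      exact hcontr AIIm hqfII w1a tII htII.le
    have hcb2 : qMb ≤ w1b ⬝ᵥ Pe.mulVec w1b := by
      rw [hqMbdef]
      rw [hMb']
      exact hcontr AIIm hqfII w1b tII htII.le
    have hsum : qMa + qMb = (z.re^2 + z.im^2) * (qa + qb) := by
      rw [hqMadef, hqMbdef, hMa, hMb, hqa, hqb, hPe]
      exact quad_rot a b z.re z.im
    have hle : (z.re^2 + z.im^2) * (qa + qb) ≤ qa + qb := by
      rw [← hsum]
      linarith
    have hc1 : z.re^2 + z.im^2 ≤ 1 := by nlinarith [hle, hQpos]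
    have hzz : z.re^2 + z.im^2 = 1 := le_antisymm hc1 h1z
    have hsum' : qMa + qMb = qa + qb := by
      rw [hsum, hzz, one_mul]
    have hsta : w1a ⬝ᵥ Pe.mulVec w1a = qa := by linarith
    have hstb : w1b ⬝ᵥ Pe.mulVec w1b = qb := by linarith
    obtain ⟨ha1, ha2, ha3⟩ := hstage a tI htI hsta
    obtain ⟨hb1, hb2, hb3⟩ := hstage b tI htI hstb
    have havec : a = ![a 0, 0, 0, 0] := by
      funext i
      fin_cases i <;> simp [ha1, ha2, ha3]
    have hbvec : b = ![b 0, 0, 0, 0] := by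
      funext i
      fin_cases i <;> simp [hb1, hb2, hb3]
    have hw1aa : w1a = a := hfix tI a ha1 ha2 ha3
    have hw1bb : w1b = b := hfix tI b hb1 hb2 hb3
    have hM0a : (M 0).mulVec a
        = ![a 0 * Real.cos (ω*tII), 0, a 0*(L1*ω) * Real.sin (ω*tII), 0] := by
      rw [hMa', hw1aa, show a = ![a 0, 0, 0, 0] from havec]
      exact hrot (a 0)
    have hM0b : (M 0).mulVec b
        = ![b 0 * Real.cos (ω*tII), 0, b 0*(L1*ω) * Real.sin (ω*tII), 0] := by
      rw [hMb', hw1bb, show b = ![b 0, 0, 0, 0] from hbvec]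
      exact hrot (b 0)
    have hL1ω : 0 < L1 * ω := by positivity
    have ha0 : a 0 = 0 := by
      have h2 := congrFun hMa (2 : Fin 4)
      rw [hM0a] at h2
      have h2' : a 0 * (L1*ω) * Real.sin (ω*tII) = z.re * a 2 - z.im * b 2 := by
        simpa [Matrix.vecHead, Matrix.vecTail] using h2
      rw [ha2, hb2] at h2'
      have h2'' : a 0 * (L1*ω) * Real.sin (ω*tII) = 0 := by linarith [h2']
      rcases mul_eq_zero.mp h2'' with h | h
      · rcases mul_eq_zero.mp h with h' | h'
        · exact h'
        · exact absurd h' hL1ω.ne'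
      · exact absurd h hsinθ.ne'
    have hb0 : b 0 = 0 := by
      have h2 := congrFun hMb (2 : Fin 4)
      rw [hM0b] at h2
      have h2' : b 0 * (L1*ω) * Real.sin (ω*tII) = z.im * a 2 + z.re * b 2 := by
        simpa [Matrix.vecHead, Matrix.vecTail] using h2
      rw [ha2, hb2] at h2'
      have h2'' : b 0 * (L1*ω) * Real.sin (ω*tII) = 0 := by linarith [h2']
      rcases mul_eq_zero.mp h2'' with h | h
      · rcases mul_eq_zero.mp h with h' | h'
        · exact h'
        · exact absurd h' hL1ω.ne'
      · exact absurd h hsinθ.ne'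
    apply hv0
    funext i
    have hre : (v i).re = 0 := by
      have := congrFun havec i
      rw [ha0] at this
      have h0 : a i = 0 := by
        rw [this]
        fin_cases i <;> simp
      simpa [ha] using h0
    have him : (v i).im = 0 := by
      have := congrFun hbvec i
      rw [hb0] at this
      have h0 : b i = 0 := by
        rw [this]
        fin_cases i <;> simp
      simpa [hb] using h0
    have : v i = 0 := by
      apply Complex.ext <;> simp [hre, him]
    simpa using this

end Helpers
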